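/- For any tables T1 : Fin m1 × Fin n1 → α and T2 : Fin m2 × Fin n2 → α, the SALTO value of (T1, T2), i.e. the maximum of |O_π| over all permutation tuples π, equals the maximum of |M| over all consistent alignments M between T1 and T2. -/

import Mathlib

/-- Any two injections `Fin k → Fin n` are conjugate by a permutation of `Fin n`. -/
lemma exists_perm_comp {k n : ℕ} (f g : Fin k → Fin n)
    (hf : Function.Injective f) (hg : Function.Injective g) :
    ∃ σ : Equiv.Perm (Fin n), ∀ i, σ (f i) = g i := by
  classical
  let e₀ : (Set.range f) ≃ (Set.range g) :=
    (Equiv.ofInjective f hf).symm.trans (Equiv.ofInjective g hg)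
  have hcard : Fintype.card ((Set.range f)ᶜ : Set (Fin n)) =
      Fintype.card ((Set.range g)ᶜ : Set (Fin n)) := by
    rw [Fintype.card_compl_set, Fintype.card_compl_set,
      Set.card_range_of_injective hf, Set.card_range_of_injective hg]
  obtain ⟨e₁⟩ := Fintype.card_eq.mp hcard
  obtain ⟨σ, hσ⟩ := (Equiv.Set.compl e₀).symm e₁
  refine ⟨σ, fun i => ?_⟩
  have h1 := hσ ⟨f i, Set.mem_range_self i⟩
  have h2 : e₀ ⟨f i, Set.mem_range_self i⟩ = ⟨g i, Set.mem_range_self i⟩ := by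
    simp [e₀, Equiv.ofInjective_symm_apply]
  rw [h1, h2]


/-- The overlap `O_π` of tables `T1`, `T2` under the permutation tuple
`π = (σ1, τ1, σ2, τ2)`: the set of positions `(i, j)` with `i < min m1 m2`,
`j < min n1 n2` where the permuted cell values agree. -/
def overlap {α : Type*} [DecidableEq α] {m1 n1 m2 n2 : ℕ}
    (T1 : Fin m1 × Fin n1 → α) (T2 : Fin m2 × Fin n2 → α)
    (σ1 : Equiv.Perm (Fin m1)) (τ1 : Equiv.Perm (Fin n1))
    (σ2 : Equiv.Perm (Fin m2)) (τ2 : Equiv.Perm (Fin n2)) :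
    Finset (Fin (min m1 m2) × Fin (min n1 n2)) :=
  Finset.univ.filter fun p =>
    T1 (σ1 (Fin.castLE (min_le_left m1 m2) p.1), τ1 (Fin.castLE (min_le_left n1 n2) p.2)) =
    T2 (σ2 (Fin.castLE (min_le_right m1 m2) p.1), τ2 (Fin.castLE (min_le_right n1 n2) p.2))

/-- The SALTO value: the maximum of `|O_π|` over all permutation tuples `π`. -/
def salto {α : Type*} [DecidableEq α] {m1 n1 m2 n2 : ℕ}
    (T1 : Fin m1 × Fin n1 → α) (T2 : Fin m2 × Fin n2 → α) : ℕ :=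
  Finset.univ.sup fun π : Equiv.Perm (Fin m1) × Equiv.Perm (Fin n1) ×
      Equiv.Perm (Fin m2) × Equiv.Perm (Fin n2) =>
    (overlap T1 T2 π.1 π.2.1 π.2.2.1 π.2.2.2).card

/-- A consistent alignment between tables `T1` and `T2`: a set of pairs of cell
positions such that matched cells have equal values, and row (resp. column)
coincidence in the first table holds iff it holds in the second. -/
def ConsistentAlignment {α : Type*} {m1 n1 m2 n2 : ℕ}
    (T1 : Fin m1 × Fin n1 → α) (T2 : Fin m2 × Fin n2 → α)
    (M : Set ((Fin m1 × Fin n1) × (Fin m2 × Fin n2))) : Prop :=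
  ∀ p ∈ M, ∀ q ∈ M,
    T1 p.1 = T2 p.2 ∧ (p.1.1 = q.1.1 ↔ p.2.1 = q.2.1) ∧ (p.1.2 = q.1.2 ↔ p.2.2 = q.2.2)

/-- **SALTO equals the maximum size of a consistent alignment.**
The SALTO value of `(T1, T2)` is the greatest element of the set of sizes of
consistent alignments between `T1` and `T2`. -/
theorem salto_eq_max_consistentAlignment {α : Type*} [DecidableEq α] {m1 n1 m2 n2 : ℕ}
    (T1 : Fin m1 × Fin n1 → α) (T2 : Fin m2 × Fin n2 → α) :
    IsGreatest {k : ℕ | ∃ M : Finset ((Fin m1 × Fin n1) × (Fin m2 × Fin n2)),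
        ConsistentAlignment T1 T2 (M : Set _) ∧ M.card = k}
      (salto T1 T2) := by
  classical
  constructor
  · -- membership: salto is achieved by some consistent alignment
    obtain ⟨π, -, hπ⟩ := Finset.exists_mem_eq_sup
      (Finset.univ : Finset (Equiv.Perm (Fin m1) × Equiv.Perm (Fin n1) ×
        Equiv.Perm (Fin m2) × Equiv.Perm (Fin n2))) Finset.univ_nonempty
      (fun π => (overlap T1 T2 π.1 π.2.1 π.2.2.1 π.2.2.2).card)
    obtain ⟨σ1, τ1, σ2, τ2⟩ := π
    set O := overlap T1 T2 σ1 τ1 σ2 τ2 with hO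
    let F : Fin (min m1 m2) × Fin (min n1 n2) →
        (Fin m1 × Fin n1) × (Fin m2 × Fin n2) := fun p =>
      ((σ1 (Fin.castLE (min_le_left m1 m2) p.1), τ1 (Fin.castLE (min_le_left n1 n2) p.2)),
       (σ2 (Fin.castLE (min_le_right m1 m2) p.1), τ2 (Fin.castLE (min_le_right n1 n2) p.2)))
    have hFinj : Function.Injective F := by
      intro a b hab
      have h1 : σ1 (Fin.castLE (min_le_left m1 m2) a.1) =
          σ1 (Fin.castLE (min_le_left m1 m2) b.1) := congrArg (Prod.fst ∘ Prod.fst) hab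
      have h2 : τ1 (Fin.castLE (min_le_left n1 n2) a.2) =
          τ1 (Fin.castLE (min_le_left n1 n2) b.2) := congrArg (Prod.snd ∘ Prod.fst) hab
      have e1 := Fin.castLE_injective _ (σ1.injective h1)
      have e2 := Fin.castLE_injective _ (τ1.injective h2)
      exact Prod.ext e1 e2
    refine ⟨O.image F, ?_, ?_⟩
    · intro p hp q hq
      simp only [Finset.coe_image, Set.mem_image, Finset.mem_coe] at hp hq
      obtain ⟨a, ha, rfl⟩ := hp
      obtain ⟨b, hb, rfl⟩ := hq
      have haO : T1 (σ1 (Fin.castLE (min_le_left m1 m2) a.1),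
            τ1 (Fin.castLE (min_le_left n1 n2) a.2)) =
          T2 (σ2 (Fin.castLE (min_le_right m1 m2) a.1),
            τ2 (Fin.castLE (min_le_right n1 n2) a.2)) :=
        (Finset.mem_filter.mp ha).2
      refine ⟨haO, ?_, ?_⟩
      · constructor
        · intro h
          have := Fin.castLE_injective _ (σ1.injective h)
          simp [F, this]
        · intro h
          have := Fin.castLE_injective _ (σ2.injective h)
          simp [F, this]
      · constructor
        · intro h
          have := Fin.castLE_injective _ (τ1.injective h)
          simp [F, this]
        · intro h
          have := Fin.castLE_injective _ (τ2.injective h)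
          simp [F, this]
    · rw [Finset.card_image_of_injective _ hFinj]
      exact hπ.symm
  · -- upper bound
    rintro k ⟨M, hM, rfl⟩
    rcases M.eq_empty_or_nonempty with rfl | hMne
    · simp
    have hrow : ∀ p ∈ M, ∀ q ∈ M, (p.1.1 = q.1.1 ↔ p.2.1 = q.2.1) := fun p hp q hq =>
      (hM p hp q hq).2.1
    have hcol : ∀ p ∈ M, ∀ q ∈ M, (p.1.2 = q.1.2 ↔ p.2.2 = q.2.2) := fun p hp q hq =>
      (hM p hp q hq).2.2
    -- rows
    set R1 : Finset (Fin m1) := M.image (fun p => p.1.1) with hR1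
    set C1 : Finset (Fin n1) := M.image (fun p => p.1.2) with hC1
    set k1 := R1.card with hk1def
    set k2 := C1.card with hk2def
    let u : Fin k1 → Fin m1 := fun i => (R1.equivFin.symm i : Fin m1)
    let w : Fin k2 → Fin n1 := fun j => (C1.equivFin.symm j : Fin n1)
    have huinj : Function.Injective u := fun i i' h =>
      R1.equivFin.symm.injective (Subtype.ext h)
    have hwinj : Function.Injective w := fun j j' h =>
      C1.equivFin.symm.injective (Subtype.ext h)
    have humem : ∀ i, u i ∈ R1 := fun i => (R1.equivFin.symm i).2
    have hwmem : ∀ j, w j ∈ C1 := fun j => (C1.equivFin.symm j).2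
    choose P hPmem hPeq using fun i : Fin k1 => Finset.mem_image.mp (humem i)
    choose Q hQmem hQeq using fun j : Fin k2 => Finset.mem_image.mp (hwmem j)
    let v : Fin k1 → Fin m2 := fun i => (P i).2.1
    let x : Fin k2 → Fin n2 := fun j => (Q j).2.2
    have hvinj : Function.Injective v := by
      intro i i' h
      have := (hrow (P i) (hPmem i) (P i') (hPmem i')).mpr h
      rw [hPeq i, hPeq i'] at this
      exact huinj this
    have hxinj : Function.Injective x := by
      intro j j' h
      have := (hcol (Q j) (hQmem j) (Q j') (hQmem j')).mpr h
      rw [hQeq j, hQeq j'] at this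
      exact hwinj this
    have hk1m1 : k1 ≤ m1 := by
      simpa using Finset.card_le_univ R1
    have hk2n1 : k2 ≤ n1 := by
      simpa using Finset.card_le_univ C1
    have hk1m2 : k1 ≤ m2 := by
      simpa using Fintype.card_le_of_injective v hvinj
    have hk2n2 : k2 ≤ n2 := by
      simpa using Fintype.card_le_of_injective x hxinj
    have hk1 : k1 ≤ min m1 m2 := le_min hk1m1 hk1m2
    have hk2 : k2 ≤ min n1 n2 := le_min hk2n1 hk2n2
    obtain ⟨σ1, hσ1⟩ := exists_perm_comp (fun i : Fin k1 => Fin.castLE hk1m1 i) u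
      (Fin.castLE_injective _) huinj
    obtain ⟨σ2, hσ2⟩ := exists_perm_comp (fun i : Fin k1 => Fin.castLE hk1m2 i) v
      (Fin.castLE_injective _) hvinj
    obtain ⟨τ1, hτ1⟩ := exists_perm_comp (fun j : Fin k2 => Fin.castLE hk2n1 j) w
      (Fin.castLE_injective _) hwinj
    obtain ⟨τ2, hτ2⟩ := exists_perm_comp (fun j : Fin k2 => Fin.castLE hk2n2 j) x
      (Fin.castLE_injective _) hxinj
    have hk1pos : 0 < k1 := by
      obtain ⟨p, hp⟩ := hMne
      exact Finset.card_pos.mpr ⟨p.1.1, Finset.mem_image_of_mem _ hp⟩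
    have hk2pos : 0 < k2 := by
      obtain ⟨p, hp⟩ := hMne
      exact Finset.card_pos.mpr ⟨p.1.2, Finset.mem_image_of_mem _ hp⟩
    let G : (Fin m1 × Fin n1) × (Fin m2 × Fin n2) → Fin (min m1 m2) × Fin (min n1 n2) :=
      fun p =>
        (if h : p.1.1 ∈ R1 then Fin.castLE hk1 (R1.equivFin ⟨p.1.1, h⟩)
          else ⟨0, lt_of_lt_of_le hk1pos hk1⟩,
         if h : p.1.2 ∈ C1 then Fin.castLE hk2 (C1.equivFin ⟨p.1.2, h⟩)
          else ⟨0, lt_of_lt_of_le hk2pos hk2⟩)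
    have key : ∀ p ∈ M, ∀ (hr : p.1.1 ∈ R1) (hc : p.1.2 ∈ C1),
        u (R1.equivFin ⟨p.1.1, hr⟩) = p.1.1 ∧ v (R1.equivFin ⟨p.1.1, hr⟩) = p.2.1 ∧
        w (C1.equivFin ⟨p.1.2, hc⟩) = p.1.2 ∧ x (C1.equivFin ⟨p.1.2, hc⟩) = p.2.2 := by
      intro p hp hr hc
      have hu : u (R1.equivFin ⟨p.1.1, hr⟩) = p.1.1 := by
        simp [u]
      have hw : w (C1.equivFin ⟨p.1.2, hc⟩) = p.1.2 := by
        simp [w]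
      refine ⟨hu, ?_, hw, ?_⟩
      · have h1 : (P (R1.equivFin ⟨p.1.1, hr⟩)).1.1 = p.1.1 := by
          rw [hPeq]; exact hu
        exact (hrow _ (hPmem _) p hp).mp h1
      · have h1 : (Q (C1.equivFin ⟨p.1.2, hc⟩)).1.2 = p.1.2 := by
          rw [hQeq]; exact hw
        exact (hcol _ (hQmem _) p hp).mp h1
    have hle : M.card ≤ (overlap T1 T2 σ1 τ1 σ2 τ2).card := by
      apply Finset.card_le_card_of_injOn G
      · intro p hp
        have hr : p.1.1 ∈ R1 := Finset.mem_image_of_mem _ hp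
        have hc : p.1.2 ∈ C1 := Finset.mem_image_of_mem _ hp
        obtain ⟨hu, hv, hw, hx⟩ := key p hp hr hc
        simp only [overlap, Finset.mem_coe, Finset.mem_filter, Finset.mem_univ, true_and, G, dif_pos hr,
          dif_pos hc]
        have e1 : Fin.castLE (min_le_left m1 m2) (Fin.castLE hk1 (R1.equivFin ⟨p.1.1, hr⟩)) =
            Fin.castLE hk1m1 (R1.equivFin ⟨p.1.1, hr⟩) := rfl
        have e2 : Fin.castLE (min_le_right m1 m2) (Fin.castLE hk1 (R1.equivFin ⟨p.1.1, hr⟩)) =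
            Fin.castLE hk1m2 (R1.equivFin ⟨p.1.1, hr⟩) := rfl
        have e3 : Fin.castLE (min_le_left n1 n2) (Fin.castLE hk2 (C1.equivFin ⟨p.1.2, hc⟩)) =
            Fin.castLE hk2n1 (C1.equivFin ⟨p.1.2, hc⟩) := rfl
        have e4 : Fin.castLE (min_le_right n1 n2) (Fin.castLE hk2 (C1.equivFin ⟨p.1.2, hc⟩)) =
            Fin.castLE hk2n2 (C1.equivFin ⟨p.1.2, hc⟩) := rfl
        rw [e1, e2, e3, e4, hσ1, hσ2, hτ1, hτ2, hu, hv, hw, hx]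
        exact (hM p hp p hp).1
      · intro p hp q hq hpq
        have hrp : p.1.1 ∈ R1 := Finset.mem_image_of_mem _ hp
        have hcp : p.1.2 ∈ C1 := Finset.mem_image_of_mem _ hp
        have hrq : q.1.1 ∈ R1 := Finset.mem_image_of_mem _ hq
        have hcq : q.1.2 ∈ C1 := Finset.mem_image_of_mem _ hq
        simp only [G, dif_pos hrp, dif_pos hcp, dif_pos hrq, dif_pos hcq, Prod.mk.injEq] at hpq
        have h1 : p.1.1 = q.1.1 := by
          have := R1.equivFin.injective (Fin.castLE_injective _ hpq.1)
          exact congrArg Subtype.val this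
        have h2 : p.1.2 = q.1.2 := by
          have := C1.equivFin.injective (Fin.castLE_injective _ hpq.2)
          exact congrArg Subtype.val this
        have h3 : p.2.1 = q.2.1 := (hrow p hp q hq).mp h1
        have h4 : p.2.2 = q.2.2 := (hcol p hp q hq).mp h2
        exact Prod.ext (Prod.ext h1 h2) (Prod.ext h3 h4)
    calc M.card ≤ (overlap T1 T2 σ1 τ1 σ2 τ2).card := hle
      _ ≤ salto T1 T2 := Finset.le_sup (f := fun π : Equiv.Perm (Fin m1) ×
            Equiv.Perm (Fin n1) × Equiv.Perm (Fin m2) × Equiv.Perm (Fin n2) =>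
            (overlap T1 T2 π.1 π.2.1 π.2.2.1 π.2.2.2).card)
          (Finset.mem_univ (σ1, τ1, σ2, τ2))
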